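/- Let (F_k, m_k) be a DBM-sequence such that the underlying DBF-sequence (F_k) is SL-closed (for every φ ∈ SL there is k with F_k {φ}-closed) and free of deep contradictions. Then for every φ ∈ SL the limit P(φ) := lim_{k→∞} B_k(φ) exists, and the resulting function P: SL → [0,1] is a probability function: P(θ)=1 whenever ⊢θ classically, and P(θ∨φ)=P(θ)+P(φ) whenever ⊢¬(θ∧φ) classically. -/

import Mathlib

/-!
Common framework: Depth-Bounded Boolean Logics, depth-bounded trees/forests,
mass functions and depth-bounded belief functions.
-/

namespace DBB

/-- Sentences of a propositional language with propositional variables in `V`,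
connectives ¬, ∧, ∨ and the constant ⊥. -/
inductive Sentence (V : Type) : Type
  | var  : V → Sentence V
  | bot  : Sentence V
  | neg  : Sentence V → Sentence V
  | conj : Sentence V → Sentence V → Sentence V
  | disj : Sentence V → Sentence V → Sentence V
  deriving DecidableEq

variable {V : Type}

/-- Boolean evaluation of a sentence under a valuation of the variables. -/
def eval (v : V → Bool) : Sentence V → Bool
  | .var p => v p
  | .bot => false
  | .neg φ => !(eval v φ)
  | .conj φ ψ => eval v φ && eval v ψ
  | .disj φ ψ => eval v φ || eval v ψ

/-- Classical (semantic) consequence `Γ ⊢ φ`. -/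
def CC (Γ : Set (Sentence V)) (φ : Sentence V) : Prop :=
  ∀ v : V → Bool, (∀ γ ∈ Γ, eval v γ = true) → eval v φ = true

/-- The 0-depth consequence relation `Γ ⊢₀ φ`: closure of `Γ` under the standard
introduction and elimination rules for ¬, ∧, ∨, ⊥. -/
inductive Der0 : Set (Sentence V) → Sentence V → Prop
  | prem {Γ : Set (Sentence V)} {φ} (h : φ ∈ Γ) : Der0 Γ φ
  | andI {Γ φ ψ} : Der0 Γ φ → Der0 Γ ψ → Der0 Γ (.conj φ ψ)
  | andE1 {Γ φ ψ} : Der0 Γ (.conj φ ψ) → Der0 Γ φ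
  | andE2 {Γ φ ψ} : Der0 Γ (.conj φ ψ) → Der0 Γ ψ
  | orI1 {Γ φ ψ} : Der0 Γ φ → Der0 Γ (.disj φ ψ)
  | orI2 {Γ φ ψ} : Der0 Γ ψ → Der0 Γ (.disj φ ψ)
  | orE1 {Γ φ ψ} : Der0 Γ (.disj φ ψ) → Der0 Γ (.neg φ) → Der0 Γ ψ
  | orE2 {Γ φ ψ} : Der0 Γ (.disj φ ψ) → Der0 Γ (.neg ψ) → Der0 Γ φ
  | negAndI1 {Γ φ ψ} : Der0 Γ (.neg φ) → Der0 Γ (.neg (.conj φ ψ))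
  | negAndI2 {Γ φ ψ} : Der0 Γ (.neg ψ) → Der0 Γ (.neg (.conj φ ψ))
  | negAndE1 {Γ φ ψ} : Der0 Γ (.neg (.conj φ ψ)) → Der0 Γ φ → Der0 Γ (.neg ψ)
  | negAndE2 {Γ φ ψ} : Der0 Γ (.neg (.conj φ ψ)) → Der0 Γ ψ → Der0 Γ (.neg φ)
  | negOrI {Γ φ ψ} : Der0 Γ (.neg φ) → Der0 Γ (.neg ψ) → Der0 Γ (.neg (.disj φ ψ))
  | negOrE1 {Γ φ ψ} : Der0 Γ (.neg (.disj φ ψ)) → Der0 Γ (.neg φ)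
  | negOrE2 {Γ φ ψ} : Der0 Γ (.neg (.disj φ ψ)) → Der0 Γ (.neg ψ)
  | dnI {Γ φ} : Der0 Γ φ → Der0 Γ (.neg (.neg φ))
  | dnE {Γ φ} : Der0 Γ (.neg (.neg φ)) → Der0 Γ φ
  | botI {Γ φ} : Der0 Γ φ → Der0 Γ (.neg φ) → Der0 Γ .bot
  | botE {Γ φ} : Der0 Γ .bot → Der0 Γ φ

/-- The set of subsentences of a sentence. -/
def subs : Sentence V → Set (Sentence V)
  | .var p => {Sentence.var p}
  | .bot => {Sentence.bot}
  | .neg φ => insert (.neg φ) (subs φ)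
  | .conj φ ψ => insert (.conj φ ψ) (subs φ ∪ subs ψ)
  | .disj φ ψ => insert (.disj φ ψ) (subs φ ∪ subs ψ)

/-- Subsentences of a set of sentences. -/
def subsSet (Γ : Set (Sentence V)) : Set (Sentence V) := ⋃ γ ∈ Γ, subs γ

/-- The k-depth consequence relations `Γ ⊢ₖ φ`: for `k > 0`, `Γ ⊢ₖ φ` iff there is a
subsentence `β` of `Γ ∪ {φ}` such that `Γ, β ⊢_{k-1} φ` and `Γ, ¬β ⊢_{k-1} φ`. -/
def DerK : ℕ → Set (Sentence V) → Sentence V → Prop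
  | 0, Γ, φ => Der0 Γ φ
  | k+1, Γ, φ => ∃ β, β ∈ subsSet (insert φ Γ) ∧
      DerK k (insert β Γ) φ ∧ DerK k (insert (Sentence.neg β) Γ) φ

/-- Elements of `SL ∪ {*}`: `none` is the empty information `*`, `some γ` is the sentence `γ`.
`prems` gives the corresponding set of premises. -/
def prems : Option (Sentence V) → Set (Sentence V)
  | none => ∅
  | some γ => {γ}

/-- `r ⊢₀ φ` for `r ∈ SL ∪ {*}`. -/
def Der0O (r : Option (Sentence V)) (φ : Sentence V) : Prop := Der0 (prems r) φ

/-- `r ⊢ₖ φ` for `r ∈ SL ∪ {*}`. -/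
def DerKO (k : ℕ) (r : Option (Sentence V)) (φ : Sentence V) : Prop := DerK k (prems r) φ

/-- classical consequence from `r ∈ SL ∪ {*}`. -/
def CCO (r : Option (Sentence V)) (φ : Sentence V) : Prop := CC (prems r) φ

/-- `r ⊢₀ s` where also the conclusion may be the empty information `*`
(deriving `*` is trivial). -/
def Der0OO (r : Option (Sentence V)) : Option (Sentence V) → Prop
  | none => True
  | some φ => Der0O r φ

/-! ### Depth-bounded trees -/

/-- Binary trees whose internal nodes are labelled by the branching sentence `β`:
a node with branching sentence `β` and current information `α` has children carrying
the information `α ∧ β` and `α ∧ ¬β` respectively. -/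
inductive DBTree (V : Type) : Type
  | leaf : DBTree V
  | node : Sentence V → DBTree V → DBTree V → DBTree V
  deriving DecidableEq

/-- The information carried by a child of a node with information `r ∈ SL ∪ {*}` and
branching sentence `β`: `r ∧ β` (or just `β` when `r = *`). -/
def extend (r : Option (Sentence V)) (β : Sentence V) : Option (Sentence V) :=
  some (match r with
    | none => β
    | some α => Sentence.conj α β)

/-- The set `Le(T)` of labels of the leaves of a tree `t` rooted in `r ∈ SL ∪ {*}`. -/
def leafLabels [DecidableEq V] : Option (Sentence V) → DBTree V → Finset (Option (Sentence V))
  | r, .leaf => {r}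
  | r, .node β t₁ t₂ =>
      leafLabels (extend r β) t₁ ∪ leafLabels (extend r (.neg β)) t₂

/-- The number of leaves of a tree. -/
def numLeaves : DBTree V → ℕ
  | .leaf => 1
  | .node _ t₁ t₂ => numLeaves t₁ + numLeaves t₂

/-- `Grow k t t'`: `t'` is obtained from `t` by expanding a (possibly empty) subset of the
depth-`k` leaves of `t`, each expanded leaf getting two children via some branching sentence. -/
inductive Grow : ℕ → DBTree V → DBTree V → Prop
  | keep (k : ℕ) : Grow k .leaf .leaf
  | expand (β : Sentence V) : Grow 0 .leaf (.node β .leaf .leaf)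
  | node {k : ℕ} {t₁ t₁' t₂ t₂' : DBTree V} (β : Sentence V) :
      Grow k t₁ t₁' → Grow k t₂ t₂' →
      Grow (k+1) (.node β t₁ t₂) (.node β t₁' t₂')

/-- A depth-bounded tree sequence (DBT-sequence): `T₀` is a single node, and `T_{k+1}` is
obtained from `T_k` by branching at least one node of depth `k`. -/
structure DBTSeq (V : Type) where
  tree : ℕ → DBTree V
  init : tree 0 = DBTree.leaf
  grow : ∀ k, Grow k (tree k) (tree (k+1))
  progress : ∀ k, tree (k+1) ≠ tree k

/-- `t` is a tree of depth `k` belonging to some DBT-sequence. -/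
def IsDepthKTree (k : ℕ) (t : DBTree V) : Prop := ∃ S : DBTSeq V, S.tree k = t

/-- `r` decides `φ`: `r ⊢₀ φ` or `r ⊢₀ ¬φ`. -/
def Decides (r : Option (Sentence V)) (φ : Sentence V) : Prop :=
  Der0O r φ ∨ Der0O r (.neg φ)

/-- `|dec(Γ, φ)|`: the number of elements of `Γ` deciding `φ`. -/
noncomputable def decCount [DecidableEq V] (Γ : Finset (Option (Sentence V)))
    (φ : Sentence V) : ℕ := by
  classical exact (Γ.filter (fun α => Decides α φ)).card

/-- A tree rooted in `r` is `{φ}`-closed iff all its leaves decide `φ`. -/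
def TreeClosed [DecidableEq V] (r : Option (Sentence V)) (t : DBTree V) (φ : Sentence V) : Prop :=
  ∀ α ∈ leafLabels r t, Decides α φ

/-- A tree `t` of depth `k` rooted in `r` is `{φ}`-maximal iff no depth-`k` tree with the same
root has strictly more leaves deciding `φ`. -/
def TreeMaximal [DecidableEq V] (r : Option (Sentence V)) (k : ℕ) (t : DBTree V)
    (φ : Sentence V) : Prop :=
  ∀ t' : DBTree V, IsDepthKTree k t' →
    decCount (leafLabels r t') φ ≤ decCount (leafLabels r t) φ

/-- A tree rooted in `r` is free of deep contradictions iff every classically inconsistent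
leaf is already 0-depth inconsistent. -/
def TreeFreeDC [DecidableEq V] (r : Option (Sentence V)) (t : DBTree V) : Prop :=
  ∀ α ∈ leafLabels r t, CCO α Sentence.bot → Der0O α Sentence.bot

/-! ### Depth-bounded forests -/

/-- A depth-bounded forest sequence (DBF-sequence) based on the support set
`Supp ⊆ SL ∪ {*}`: a DBT-sequence rooted in `γ` for each `γ ∈ Supp`. -/
structure DBFSeq (V : Type) where
  Supp : Finset (Option (Sentence V))
  suppNE : Supp.Nonempty
  tree : Option (Sentence V) → ℕ → DBTree V
  init : ∀ γ ∈ Supp, tree γ 0 = DBTree.leaf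
  grow : ∀ γ ∈ Supp, ∀ k, Grow k (tree γ k) (tree γ (k+1))
  progress : ∀ γ ∈ Supp, ∀ k, tree γ (k+1) ≠ tree γ k

/-- `Le(F_k)`: the leaves of the depth-`k` forest of a DBF-sequence. -/
noncomputable def DBFSeq.leaves [DecidableEq V] (F : DBFSeq V) (k : ℕ) :
    Finset (Option (Sentence V)) := by
  classical exact F.Supp.biUnion (fun γ => leafLabels γ (F.tree γ k))

/-- The depth-`k` forest is `{φ}`-closed (tree-wise). -/
def DBFSeq.Closed [DecidableEq V] (F : DBFSeq V) (k : ℕ) (φ : Sentence V) : Prop :=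
  ∀ γ ∈ F.Supp, TreeClosed γ (F.tree γ k) φ

/-- The depth-`k` forest is `{φ}`-maximal (tree-wise). -/
def DBFSeq.Maximal [DecidableEq V] (F : DBFSeq V) (k : ℕ) (φ : Sentence V) : Prop :=
  ∀ γ ∈ F.Supp, TreeMaximal γ k (F.tree γ k) φ

/-- The depth-`k` forest is free of deep contradictions (tree-wise). -/
def DBFSeq.FreeDC [DecidableEq V] (F : DBFSeq V) (k : ℕ) : Prop :=
  ∀ γ ∈ F.Supp, TreeFreeDC γ (F.tree γ k)

/-- `MassStep m m' r t t'`: the mass function `m'` refines `m` along the expansion of `t`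
into `t'` (leaves keep their mass; the mass of an expanded leaf is split among its
two children). -/
inductive MassStep (m m' : Option (Sentence V) → ℝ) :
    Option (Sentence V) → DBTree V → DBTree V → Prop
  | keep {r : Option (Sentence V)} :
      m' r = m r → MassStep m m' r .leaf .leaf
  | split {r : Option (Sentence V)} {β : Sentence V} :
      m' (extend r β) + m' (extend r (.neg β)) = m r →
      MassStep m m' r .leaf (.node β .leaf .leaf)
  | node {r : Option (Sentence V)} {β : Sentence V} {t₁ t₁' t₂ t₂' : DBTree V} :
      MassStep m m' (extend r β) t₁ t₁' →
      MassStep m m' (extend r (.neg β)) t₂ t₂' →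
      MassStep m m' r (.node β t₁ t₂) (.node β t₁' t₂')

/-- A depth-bounded mass sequence (DBM-sequence): a DBF-sequence free of deep contradictions
together with probability mass functions `m_k` over `Le(F_k)` such that the mass of each leaf
of `F_k` is either kept (if it remains a leaf) or split among its two children in `F_{k+1}`. -/
structure DBMSeq (V : Type) [DecidableEq V] extends DBFSeq V where
  m : ℕ → Option (Sentence V) → ℝ
  nonneg : ∀ k, ∀ α ∈ toDBFSeq.leaves k, 0 ≤ m k α
  total : ∀ k, ∑ α ∈ toDBFSeq.leaves k, m k α = 1
  incZero : ∀ k, ∀ α ∈ toDBFSeq.leaves k, Der0O α Sentence.bot → m k α = 0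
  freeDC : ∀ k, toDBFSeq.FreeDC k
  massStep : ∀ γ ∈ toDBFSeq.Supp, ∀ k,
      MassStep (m k) (m (k+1)) γ (toDBFSeq.tree γ k) (toDBFSeq.tree γ (k+1))

/-- The k-depth belief function `B_k(φ) = m_k(b_k(φ))` where
`b_k(φ) = {α ∈ Le(F_k) : α ⊢₀ φ, α ⊬₀ ⊥}`. -/
noncomputable def DBMSeq.B [DecidableEq V] (M : DBMSeq V) (k : ℕ) (φ : Sentence V) : ℝ := by
  classical exact ∑ α ∈ M.toDBFSeq.leaves k,
    if Der0O α φ ∧ ¬ Der0O α Sentence.bot then M.m k α else 0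

/-- The k-depth plausibility function `Pl_k(φ) = m_k(pl_k(φ))` where
`pl_k(φ) = {α ∈ Le(F_k) : α ⊬₀ ¬φ}`. -/
noncomputable def DBMSeq.Pl [DecidableEq V] (M : DBMSeq V) (k : ℕ) (φ : Sentence V) : ℝ := by
  classical exact ∑ α ∈ M.toDBFSeq.leaves k,
    if ¬ Der0O α (Sentence.neg φ) then M.m k α else 0

/-! ### Auxiliary notions -/

/-- A probability function on `SL`: a `[0,1]`-valued function which is normalised on
classical tautologies and additive on classically incompatible disjuncts. -/
def IsProbability (P : Sentence V → ℝ) : Prop :=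
  (∀ φ, 0 ≤ P φ ∧ P φ ≤ 1) ∧
  (∀ φ, CC (∅ : Set (Sentence V)) φ → P φ = 1) ∧
  (∀ φ ψ, CC (∅ : Set (Sentence V)) (.neg (.conj φ ψ)) →
    P (.disj φ ψ) = P φ + P ψ)

/-- The literal on `p` prescribed by the valuation `v`. -/
def litOf (v : V → Bool) (p : V) : Sentence V :=
  if v p then .var p else .neg (.var p)

/-- Left-associated conjunction `φ ∧ ψ₁ ∧ ⋯ ∧ ψₙ`. -/
def listConj : Sentence V → List (Sentence V) → Sentence V
  | φ, [] => φ
  | φ, ψ :: l => listConj (.conj φ ψ) l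

/-- Left-associated disjunction `φ ∨ ψ₁ ∨ ⋯ ∨ ψₙ`. -/
def listDisj : Sentence V → List (Sentence V) → Sentence V
  | φ, [] => φ
  | φ, ψ :: l => listDisj (.disj φ ψ) l

/-- Conjunction of a list of sentences (`⊥` for the empty list, which is never used). -/
def conjList : List (Sentence V) → Sentence V
  | [] => .bot
  | ψ :: l => listConj ψ l

/-- Disjunction of a list of sentences (`⊥` for the empty list, which is never used). -/
def disjList : List (Sentence V) → Sentence V
  | [] => .bot
  | ψ :: l => listDisj ψ l

/-- `α` is an atom of the language: a maximal (classically consistent) conjunction of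
literals, with exactly one literal per propositional variable. -/
def IsAtom (α : Sentence V) : Prop :=
  ∃ (v : V → Bool) (l : List V), l.Nodup ∧ (∀ p : V, p ∈ l) ∧ l ≠ [] ∧
    α = conjList (l.map (litOf v))

/-- The conjunction `⋀_{i ∈ S} φ_i` of a finite set of indexed sentences. -/
def finsetConj {n : ℕ} (φ : Fin n → Sentence V) (S : Finset (Fin n)) : Sentence V :=
  conjList ((S.sort (· ≤ ·)).map φ)

/-- The finite set of subsentences of a sentence. -/
def subsF [DecidableEq V] : Sentence V → Finset (Sentence V)
  | .var p => {Sentence.var p}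
  | .bot => {Sentence.bot}
  | .neg φ => insert (.neg φ) (subsF φ)
  | .conj φ ψ => insert (.conj φ ψ) (subsF φ ∪ subsF ψ)
  | .disj φ ψ => insert (.disj φ ψ) (subsF φ ∪ subsF ψ)

/-- All branching sentences of the tree belong to `S`. -/
def BranchesIn [DecidableEq V] : DBTree V → Finset (Sentence V) → Prop
  | .leaf, _ => True
  | .node β t₁ t₂, S => β ∈ S ∧ BranchesIn t₁ S ∧ BranchesIn t₂ S



/-! ### Auxiliary lemmas for Statement 12 -/

section Statement12Aux

variable {V : Type}

attribute [local instance 10] Classical.propDecidable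

/-- A size function on sentences. -/
def ssize : Sentence V → ℕ
  | .var _ => 1
  | .bot => 1
  | .neg φ => ssize φ + 1
  | .conj φ ψ => ssize φ + ssize ψ + 1
  | .disj φ ψ => ssize φ + ssize ψ + 1

theorem der0_subst {Δ : Set (Sentence V)} {φ : Sentence V} (h : Der0 Δ φ) :
    ∀ {Γ : Set (Sentence V)}, (∀ δ ∈ Δ, Der0 Γ δ) → Der0 Γ φ := by
  induction h with
  | prem h => exact fun hΔ => hΔ _ h
  | andI _ _ ih1 ih2 => exact fun hΔ => .andI (ih1 hΔ) (ih2 hΔ)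
  | andE1 _ ih => exact fun hΔ => .andE1 (ih hΔ)
  | andE2 _ ih => exact fun hΔ => .andE2 (ih hΔ)
  | orI1 _ ih => exact fun hΔ => .orI1 (ih hΔ)
  | orI2 _ ih => exact fun hΔ => .orI2 (ih hΔ)
  | orE1 _ _ ih1 ih2 => exact fun hΔ => .orE1 (ih1 hΔ) (ih2 hΔ)
  | orE2 _ _ ih1 ih2 => exact fun hΔ => .orE2 (ih1 hΔ) (ih2 hΔ)
  | negAndI1 _ ih => exact fun hΔ => .negAndI1 (ih hΔ)
  | negAndI2 _ ih => exact fun hΔ => .negAndI2 (ih hΔ)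
  | negAndE1 _ _ ih1 ih2 => exact fun hΔ => .negAndE1 (ih1 hΔ) (ih2 hΔ)
  | negAndE2 _ _ ih1 ih2 => exact fun hΔ => .negAndE2 (ih1 hΔ) (ih2 hΔ)
  | negOrI _ _ ih1 ih2 => exact fun hΔ => .negOrI (ih1 hΔ) (ih2 hΔ)
  | negOrE1 _ ih => exact fun hΔ => .negOrE1 (ih hΔ)
  | negOrE2 _ ih => exact fun hΔ => .negOrE2 (ih hΔ)
  | dnI _ ih => exact fun hΔ => .dnI (ih hΔ)
  | dnE _ ih => exact fun hΔ => .dnE (ih hΔ)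
  | botI _ _ ih1 ih2 => exact fun hΔ => .botI (ih1 hΔ) (ih2 hΔ)
  | botE _ ih => exact fun hΔ => .botE (ih hΔ)

theorem der0_mono {Γ Γ' : Set (Sentence V)} {φ : Sentence V} (h : Der0 Γ φ) (hs : Γ ⊆ Γ') :
    Der0 Γ' φ :=
  der0_subst h (fun _ hδ => .prem (hs hδ))

theorem der0_cut {Γ : Set (Sentence V)} {β φ : Sentence V} (hβ : Der0 Γ β)
    (h : Der0 (insert β Γ) φ) : Der0 Γ φ :=
  der0_subst h (fun δ hδ => by
    rcases Set.mem_insert_iff.mp hδ with rfl | hδ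
    · exact hβ
    · exact .prem hδ)

theorem der0_sound {Γ : Set (Sentence V)} {φ : Sentence V} (h : Der0 Γ φ) : CC Γ φ := by
  induction h with
  | prem h => exact fun v hv => hv _ h
  | andI _ _ ih1 ih2 => intro v hv; have h1 := ih1 v hv; have h2 := ih2 v hv; simp [eval, h1, h2]
  | andE1 _ ih => intro v hv; have h1 := ih v hv; simp [eval] at h1 ⊢; exact h1.1
  | andE2 _ ih => intro v hv; have h1 := ih v hv; simp [eval] at h1 ⊢; exact h1.2
  | orI1 _ ih => intro v hv; have h1 := ih v hv; simp [eval, h1]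
  | orI2 _ ih => intro v hv; have h1 := ih v hv; simp [eval, h1]
  | orE1 _ _ ih1 ih2 => intro v hv; have h1 := ih1 v hv; have h2 := ih2 v hv
                        simp [eval] at h1 h2 ⊢ <;> first | tauto | simp_all
  | orE2 _ _ ih1 ih2 => intro v hv; have h1 := ih1 v hv; have h2 := ih2 v hv
                        simp [eval] at h1 h2 ⊢ <;> first | tauto | simp_all
  | negAndI1 _ ih => intro v hv; have h1 := ih v hv; simp [eval] at h1 ⊢ <;> first | tauto | simp_all
  | negAndI2 _ ih => intro v hv; have h1 := ih v hv; simp [eval] at h1 ⊢ <;> first | tauto | simp_all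
  | negAndE1 _ _ ih1 ih2 => intro v hv; have h1 := ih1 v hv; have h2 := ih2 v hv
                            simp [eval] at h1 h2 ⊢ <;> first | tauto | simp_all
  | negAndE2 _ _ ih1 ih2 => intro v hv; have h1 := ih1 v hv; have h2 := ih2 v hv
                            simp [eval] at h1 h2 ⊢ <;> first | tauto | simp_all
  | negOrI _ _ ih1 ih2 => intro v hv; have h1 := ih1 v hv; have h2 := ih2 v hv
                          simp [eval] at h1 h2 ⊢ <;> first | tauto | simp_all
  | negOrE1 _ ih => intro v hv; have h1 := ih v hv; simp [eval] at h1 ⊢ <;> first | tauto | simp_all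
  | negOrE2 _ ih => intro v hv; have h1 := ih v hv; simp [eval] at h1 ⊢ <;> first | tauto | simp_all
  | dnI _ ih => intro v hv; have h1 := ih v hv; simp [eval] at h1 ⊢ <;> first | tauto | simp_all
  | dnE _ ih => intro v hv; have h1 := ih v hv; simp [eval] at h1 ⊢ <;> first | tauto | simp_all
  | botI _ _ ih1 ih2 => intro v hv; have h1 := ih1 v hv; have h2 := ih2 v hv
                        simp [eval] at h1 h2 ⊢; simp [h1] at h2
  | botE _ ih => intro v hv; have h1 := ih v hv; simp [eval] at h1

theorem der0_extend {r : Option (Sentence V)} {β φ : Sentence V} (h : Der0O r φ) :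
    Der0O (extend r β) φ := by
  cases r with
  | none => exact der0_mono h (Set.empty_subset _)
  | some a =>
      have h1 : Der0 ({Sentence.conj a β} : Set (Sentence V)) a := .andE1 (.prem rfl)
      exact der0_cut h1 (der0_mono h (by
        intro x hx
        simp only [prems, Set.mem_singleton_iff] at hx
        subst hx
        exact Set.mem_insert _ _))

theorem decides_extend {r : Option (Sentence V)} {β φ : Sentence V} (h : Decides r φ) :
    Decides (extend r β) φ :=
  h.imp der0_extend der0_extend

/-- Ancestor relation on roots/labels. -/
inductive ROf : Option (Sentence V) → Option (Sentence V) → Prop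
  | refl (r) : ROf r r
  | step {r s} (β : Sentence V) : ROf r s → ROf r (extend s β)

def osz : Option (Sentence V) → ℕ
  | none => 0
  | some φ => ssize φ + 1

theorem osz_extend (r : Option (Sentence V)) (β : Sentence V) : osz r < osz (extend r β) := by
  cases r <;> simp [extend, osz, ssize] <;> omega

theorem rOf_osz {r s : Option (Sentence V)} (h : ROf r s) : osz r ≤ osz s := by
  induction h with
  | refl => exact le_rfl
  | step β _ ih => exact le_trans ih (le_of_lt (osz_extend _ β))

theorem rOf_trans {a b c : Option (Sentence V)} (h1 : ROf a b) (h2 : ROf b c) : ROf a c := by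
  induction h2 with
  | refl => exact h1
  | step β _ ih => exact .step β ih

theorem rOf_none (s : Option (Sentence V)) : ROf none s := by
  cases s with
  | none => exact .refl none
  | some φ => exact ROf.step φ (.refl none)

theorem rOf_inv {s t : Option (Sentence V)} (h : ROf s t) :
    s = t ∨ ∃ s' β', ROf s s' ∧ t = extend s' β' := by
  cases h with
  | refl => exact Or.inl rfl
  | step β h' => exact Or.inr ⟨_, β, h', rfl⟩

theorem rOf_none_right {r : Option (Sentence V)} (h : ROf r none) : r = none := by
  rcases rOf_inv h with h | ⟨s', β', _, hE⟩
  · exact h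
  · exact absurd hE (by cases s' <;> simp [extend])

theorem extend_eq {s s' : Option (Sentence V)} {β β' : Sentence V}
    (h : extend s β = extend s' β') :
    (s = s' ∧ β = β') ∨ (s = none ∧ ∃ y, s' = some y ∧ β = .conj y β')
      ∨ (s' = none ∧ ∃ y, s = some y ∧ β' = .conj y β) := by
  cases s with
  | none => cases s' with
    | none => simp [extend] at h; exact Or.inl ⟨rfl, h⟩
    | some y => simp [extend] at h; exact Or.inr (Or.inl ⟨rfl, y, rfl, h⟩)
  | some x => cases s' with
    | none => simp [extend] at h; exact Or.inr (Or.inr ⟨rfl, x, rfl, h.symm⟩)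
    | some y => simp [extend] at h; exact Or.inl ⟨by rw [h.1], h.2⟩

theorem rOf_total {s₁ s₂ α : Option (Sentence V)} (h₁ : ROf s₁ α) (h₂ : ROf s₂ α) :
    ROf s₁ s₂ ∨ ROf s₂ s₁ := by
  induction h₁ generalizing s₂ with
  | refl => exact Or.inr h₂
  | @step s β h ih =>
    rcases rOf_inv h₂ with rfl | ⟨s', β', h₂', hE⟩
    · exact Or.inl (.step β h)
    · rcases extend_eq hE.symm with ⟨hs, _⟩ | ⟨hs, _⟩ | ⟨hs, _⟩
      · exact ih (hs ▸ h₂')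
      · rw [hs] at h₂'
        rw [rOf_none_right h₂']
        exact Or.inr (rOf_none _)
      · rw [hs] at h
        rw [rOf_none_right h]
        exact Or.inl (rOf_none s₂)

theorem rOf_eq_or_lt {r s : Option (Sentence V)} (h : ROf r s) : r = s ∨ osz r < osz s := by
  induction h with
  | refl => exact Or.inl rfl
  | step β _ ih =>
    right
    rcases ih with rfl | hlt
    · exact osz_extend _ β
    · exact lt_trans hlt (osz_extend _ β)

theorem osz_extend_neg (r : Option (Sentence V)) (β : Sentence V) :
    osz (extend r (.neg β)) = osz (extend r β) + 1 := by
  cases r <;> simp [extend, osz, ssize] <;> omega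

theorem not_rOf_negext_ext {r : Option (Sentence V)} {β : Sentence V}
    (h : ROf (extend r (.neg β)) (extend r β)) : False := by
  have hsz := osz_extend_neg r β
  rcases rOf_eq_or_lt h with he | hlt
  · rw [he] at hsz; omega
  · omega

theorem not_rOf_ext_negext {r : Option (Sentence V)} {β : Sentence V}
    (h : ROf (extend r β) (extend r (.neg β))) : False := by
  rcases rOf_inv h with he | ⟨s', β', h', hE⟩
  · have hsz := osz_extend_neg r β
    rw [he] at hsz; omega
  · rcases extend_eq hE with ⟨h1, _⟩ | ⟨_, y, h2, h3⟩ | ⟨h1, _⟩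
    · rw [← h1] at h'
      have := rOf_osz h'
      have := osz_extend r β
      omega
    · exact absurd h3 (by simp)
    · rw [h1] at h'
      have := rOf_none_right h'
      cases r <;> simp [extend] at this

theorem mem_leafLabels_rOf [DecidableEq V] :
    ∀ {t : DBTree V} {r α : Option (Sentence V)}, α ∈ leafLabels r t → ROf r α := by
  intro t
  induction t with
  | leaf =>
    intro r α h
    simp only [leafLabels, Finset.mem_singleton] at h
    subst h; exact .refl _
  | node β t₁ t₂ ih₁ ih₂ =>
    intro r α h
    simp only [leafLabels, Finset.mem_union] at h
    rcases h with h | h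
    · exact rOf_trans (.step β (.refl r)) (ih₁ h)
    · exact rOf_trans (.step (.neg β) (.refl r)) (ih₂ h)

theorem leafLabels_disjoint [DecidableEq V] (r : Option (Sentence V)) (β : Sentence V)
    (t₁ t₂ : DBTree V) :
    Disjoint (leafLabels (extend r β) t₁) (leafLabels (extend r (.neg β)) t₂) := by
  rw [Finset.disjoint_left]
  intro α h1 h2
  rcases rOf_total (mem_leafLabels_rOf h1) (mem_leafLabels_rOf h2) with h | h
  · exact not_rOf_ext_negext h
  · exact not_rOf_negext_ext h

theorem sum_leafLabels_node [DecidableEq V] (f : Option (Sentence V) → ℝ)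
    (r : Option (Sentence V)) (β : Sentence V) (t₁ t₂ : DBTree V) :
    ∑ α ∈ leafLabels r (.node β t₁ t₂), f α
      = (∑ α ∈ leafLabels (extend r β) t₁, f α)
        + ∑ α ∈ leafLabels (extend r (.neg β)) t₂, f α := by
  simp only [leafLabels]
  exact Finset.sum_union (leafLabels_disjoint r β t₁ t₂)

theorem massStep_sum [DecidableEq V] {μ μ' : Option (Sentence V) → ℝ}
    {r : Option (Sentence V)} {t t' : DBTree V} (h : MassStep μ μ' r t t') :
    ∑ α ∈ leafLabels r t', μ' α = ∑ α ∈ leafLabels r t, μ α := by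
  induction h with
  | keep he => simp only [leafLabels, Finset.sum_singleton]; exact he
  | split he =>
    rw [sum_leafLabels_node]
    simp only [leafLabels, Finset.sum_singleton]
    exact he
  | node _ _ ih₁ ih₂ => rw [sum_leafLabels_node, sum_leafLabels_node, ih₁, ih₂]

theorem massStep_closed [DecidableEq V] {μ μ' : Option (Sentence V) → ℝ} {φ : Sentence V}
    {r : Option (Sentence V)} {t t' : DBTree V} (h : MassStep μ μ' r t t') :
    (∀ α ∈ leafLabels r t, Decides α φ) → ∀ α ∈ leafLabels r t', Decides α φ := by
  induction h with
  | keep _ => exact fun hc => hc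
  | @split r β _ =>
    intro hc α hα
    have hr : Decides r φ := hc r (by simp [leafLabels])
    simp only [leafLabels, Finset.mem_union, Finset.mem_singleton] at hα
    rcases hα with rfl | rfl
    · exact decides_extend hr
    · exact decides_extend hr
  | @node r β t₁ t₁' t₂ t₂' _ _ ih₁ ih₂ =>
    intro hc α hα
    simp only [leafLabels, Finset.mem_union] at hα
    rcases hα with hα | hα
    · exact ih₁ (fun x hx => hc x (by
        simp only [leafLabels, Finset.mem_union]; exact Or.inl hx)) α hα
    · exact ih₂ (fun x hx => hc x (by
        simp only [leafLabels, Finset.mem_union]; exact Or.inr hx)) α hα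

theorem massStep_Bsum [DecidableEq V] {φ : Sentence V} {μ μ' : Option (Sentence V) → ℝ}
    {r : Option (Sentence V)} {t t' : DBTree V} (h : MassStep μ μ' r t t') :
    (∀ α ∈ leafLabels r t, Decides α φ) →
    (∀ α ∈ leafLabels r t', Der0O α Sentence.bot → μ' α = 0) →
    (∑ α ∈ leafLabels r t',
        if Der0O α φ ∧ ¬ Der0O α Sentence.bot then μ' α else 0)
      = ∑ α ∈ leafLabels r t,
          if Der0O α φ ∧ ¬ Der0O α Sentence.bot then μ α else 0 := by
  induction h with
  | @keep r he =>
    intro _ _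
    simp only [leafLabels, Finset.sum_singleton, he]
  | @split r β he =>
    intro hc h0
    have hr : Decides r φ := hc r (by simp [leafLabels])
    have e1 : extend r β ∈ leafLabels r (DBTree.node β DBTree.leaf DBTree.leaf) := by
      simp [leafLabels]
    have e2 : extend r (.neg β) ∈ leafLabels r (DBTree.node β DBTree.leaf DBTree.leaf) := by
      simp [leafLabels]
    rw [sum_leafLabels_node]
    simp only [leafLabels, Finset.sum_singleton]
    by_cases hb : Der0O r Sentence.bot
    · rw [if_neg (fun hh => hh.2 (der0_extend hb)),
        if_neg (fun hh => hh.2 (der0_extend hb)),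
        if_neg (fun hh => hh.2 hb)]
      ring
    · by_cases hφ : Der0O r φ
      · have key : ∀ c ∈ leafLabels r (DBTree.node β DBTree.leaf DBTree.leaf),
            (if Der0O c φ ∧ ¬ Der0O c Sentence.bot then μ' c else 0) = μ' c := by
          intro c hcmem
          have hcφ : Der0O c φ := by
            simp only [leafLabels, Finset.mem_union, Finset.mem_singleton] at hcmem
            rcases hcmem with rfl | rfl <;> exact der0_extend hφ
          by_cases hcb : Der0O c Sentence.bot
          · rw [if_neg (fun hh => hh.2 hcb), h0 c hcmem hcb]
          · rw [if_pos ⟨hcφ, hcb⟩]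
        rw [key _ e1, key _ e2, if_pos ⟨hφ, hb⟩]
        exact he
      · have hnφ : Der0O r (.neg φ) := hr.resolve_left hφ
        have key : ∀ c ∈ leafLabels r (DBTree.node β DBTree.leaf DBTree.leaf),
            (if Der0O c φ ∧ ¬ Der0O c Sentence.bot then μ' c else 0) = 0 := by
          intro c hcmem
          have hcnφ : Der0O c (.neg φ) := by
            simp only [leafLabels, Finset.mem_union, Finset.mem_singleton] at hcmem
            rcases hcmem with rfl | rfl <;> exact der0_extend hnφ
          exact if_neg (fun hh => hh.2 (Der0.botI hh.1 hcnφ))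
        rw [key _ e1, key _ e2, if_neg (fun hh => hφ hh.1)]
        ring
  | @node r β t₁ t₁' t₂ t₂' h₁ h₂ ih₁ ih₂ =>
    intro hc h0
    rw [sum_leafLabels_node, sum_leafLabels_node,
      ih₁ (fun x hx => hc x (by
            simp only [leafLabels, Finset.mem_union]; exact Or.inl hx))
          (fun x hx => h0 x (by
            simp only [leafLabels, Finset.mem_union]; exact Or.inl hx)),
      ih₂ (fun x hx => hc x (by
            simp only [leafLabels, Finset.mem_union]; exact Or.inr hx))
          (fun x hx => h0 x (by
            simp only [leafLabels, Finset.mem_union]; exact Or.inr hx))]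

theorem leaves_eq [DecidableEq V] (F : DBFSeq V) (k : ℕ) :
    F.leaves k = F.Supp.biUnion (fun γ => leafLabels γ (F.tree γ k)) := rfl

theorem mem_leaves_iff [DecidableEq V] {F : DBFSeq V} {k : ℕ} {α : Option (Sentence V)} :
    α ∈ F.leaves k ↔ ∃ γ ∈ F.Supp, α ∈ leafLabels γ (F.tree γ k) := by
  rw [leaves_eq]; exact Finset.mem_biUnion

theorem B_eq [DecidableEq V] (M : DBMSeq V) (k : ℕ) (φ : Sentence V) :
    M.B k φ = ∑ α ∈ M.toDBFSeq.leaves k,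
      (if Der0O α φ ∧ ¬ Der0O α Sentence.bot then M.m k α else 0) := rfl

theorem tree_total [DecidableEq V] (M : DBMSeq V) :
    ∀ k, ∑ γ ∈ M.toDBFSeq.Supp, ∑ α ∈ leafLabels γ (M.toDBFSeq.tree γ k), M.m k α = 1 := by
  intro k
  induction k with
  | zero =>
    have h1 : ∀ γ ∈ M.toDBFSeq.Supp, leafLabels γ (M.toDBFSeq.tree γ 0) = {γ} := by
      intro γ hγ
      rw [M.toDBFSeq.init γ hγ]
      rfl
    have h2 : M.toDBFSeq.leaves 0 = M.toDBFSeq.Supp := by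
      apply Finset.ext
      intro a
      rw [mem_leaves_iff]
      constructor
      · rintro ⟨γ, hγ, ha⟩
        rw [h1 γ hγ, Finset.mem_singleton] at ha
        exact ha ▸ hγ
      · intro ha
        exact ⟨a, ha, by rw [h1 a ha]; exact Finset.mem_singleton_self a⟩
    have h3 := M.total 0
    rw [h2] at h3
    rw [← h3]
    refine Finset.sum_congr rfl fun γ hγ => ?_
    rw [h1 γ hγ, Finset.sum_singleton]
  | succ k ih =>
    rw [← ih]
    exact Finset.sum_congr rfl fun γ hγ => massStep_sum (M.massStep γ hγ k)

theorem sum_union_le {ι : Type} [DecidableEq ι] {s t : Finset ι} {f : ι → ℝ}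
    (h : ∀ x ∈ t, 0 ≤ f x) : ∑ x ∈ s ∪ t, f x ≤ (∑ x ∈ s, f x) + ∑ x ∈ t, f x := by
  rw [← Finset.union_sdiff_self_eq_union, Finset.sum_union Finset.disjoint_sdiff]
  exact add_le_add le_rfl
    (Finset.sum_le_sum_of_subset_of_nonneg Finset.sdiff_subset (fun x hx _ => h x hx))

theorem sum_biUnion_le {ι κ : Type} [DecidableEq κ] {T : ι → Finset κ} {f : κ → ℝ} :
    ∀ S : Finset ι, (∀ j ∈ S.biUnion T, 0 ≤ f j) →
      ∑ j ∈ S.biUnion T, f j ≤ ∑ i ∈ S, ∑ j ∈ T i, f j := by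
  intro S
  induction S using Finset.induction_on with
  | empty => intro _; simp
  | @insert a s ha ih =>
    intro h
    rw [Finset.biUnion_insert] at h ⊢
    rw [Finset.sum_insert ha]
    calc ∑ j ∈ T a ∪ s.biUnion T, f j
        ≤ (∑ j ∈ T a, f j) + ∑ j ∈ s.biUnion T, f j :=
          sum_union_le (fun x hx => h x (Finset.mem_union_right _ hx))
      _ ≤ _ := add_le_add le_rfl (ih (fun x hx => h x (Finset.mem_union_right _ hx)))

theorem forest_decomp [DecidableEq V] (M : DBMSeq V) (k : ℕ) (f : Option (Sentence V) → ℝ)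
    (h0 : ∀ α ∈ M.toDBFSeq.leaves k, 0 ≤ f α)
    (h1 : ∀ α ∈ M.toDBFSeq.leaves k, f α ≤ M.m k α) :
    ∑ α ∈ M.toDBFSeq.leaves k, f α
      = ∑ γ ∈ M.toDBFSeq.Supp, ∑ α ∈ leafLabels γ (M.toDBFSeq.tree γ k), f α := by
  have hA : ∑ α ∈ M.toDBFSeq.leaves k, f α
      ≤ ∑ γ ∈ M.toDBFSeq.Supp, ∑ α ∈ leafLabels γ (M.toDBFSeq.tree γ k), f α := by
    rw [leaves_eq] at h0 ⊢
    exact sum_biUnion_le _ h0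
  have hB : ∑ α ∈ M.toDBFSeq.leaves k, (M.m k α - f α)
      ≤ ∑ γ ∈ M.toDBFSeq.Supp, ∑ α ∈ leafLabels γ (M.toDBFSeq.tree γ k), (M.m k α - f α) := by
    have hg0 : ∀ α ∈ M.toDBFSeq.leaves k, 0 ≤ M.m k α - f α :=
      fun α hα => sub_nonneg.mpr (h1 α hα)
    rw [leaves_eq] at hg0 ⊢
    exact sum_biUnion_le _ hg0
  have hT1 : (∑ α ∈ M.toDBFSeq.leaves k, f α)
      + ∑ α ∈ M.toDBFSeq.leaves k, (M.m k α - f α) = 1 := by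
    rw [← Finset.sum_add_distrib]
    rw [show (∑ α ∈ M.toDBFSeq.leaves k, (f α + (M.m k α - f α)))
        = ∑ α ∈ M.toDBFSeq.leaves k, M.m k α from Finset.sum_congr rfl fun α _ => by ring]
    exact M.total k
  have hT2 : (∑ γ ∈ M.toDBFSeq.Supp, ∑ α ∈ leafLabels γ (M.toDBFSeq.tree γ k), f α)
      + ∑ γ ∈ M.toDBFSeq.Supp, ∑ α ∈ leafLabels γ (M.toDBFSeq.tree γ k), (M.m k α - f α)
        = 1 := by
    rw [← Finset.sum_add_distrib]
    rw [show (∑ γ ∈ M.toDBFSeq.Supp,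
          ((∑ α ∈ leafLabels γ (M.toDBFSeq.tree γ k), f α)
            + ∑ α ∈ leafLabels γ (M.toDBFSeq.tree γ k), (M.m k α - f α)))
        = ∑ γ ∈ M.toDBFSeq.Supp, ∑ α ∈ leafLabels γ (M.toDBFSeq.tree γ k), M.m k α from
        Finset.sum_congr rfl fun γ _ => by
          rw [← Finset.sum_add_distrib]
          exact Finset.sum_congr rfl fun α _ => by ring]
    exact tree_total M k
  linarith

theorem B_succ [DecidableEq V] (M : DBMSeq V) (φ : Sentence V) (k : ℕ)
    (hc : M.toDBFSeq.Closed k φ) : M.B (k + 1) φ = M.B k φ := by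
  have hF0 : ∀ (j : ℕ), ∀ α ∈ M.toDBFSeq.leaves j,
      0 ≤ (if Der0O α φ ∧ ¬ Der0O α Sentence.bot then M.m j α else 0) := by
    intro j α hα
    split
    · exact M.nonneg j α hα
    · exact le_rfl
  have hF1 : ∀ (j : ℕ), ∀ α ∈ M.toDBFSeq.leaves j,
      (if Der0O α φ ∧ ¬ Der0O α Sentence.bot then M.m j α else 0) ≤ M.m j α := by
    intro j α hα
    split
    · exact le_rfl
    · exact M.nonneg j α hα
  calc M.B (k + 1) φ
      = ∑ γ ∈ M.toDBFSeq.Supp, ∑ α ∈ leafLabels γ (M.toDBFSeq.tree γ (k + 1)),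
          (if Der0O α φ ∧ ¬ Der0O α Sentence.bot then M.m (k + 1) α else 0) := by
        rw [B_eq]
        exact forest_decomp M (k + 1) _ (hF0 (k + 1)) (hF1 (k + 1))
    _ = ∑ γ ∈ M.toDBFSeq.Supp, ∑ α ∈ leafLabels γ (M.toDBFSeq.tree γ k),
          (if Der0O α φ ∧ ¬ Der0O α Sentence.bot then M.m k α else 0) := by
        refine Finset.sum_congr rfl fun γ hγ => ?_
        exact massStep_Bsum (M.massStep γ hγ k) (hc γ hγ)
          (fun α hα hb => M.incZero (k + 1) α (mem_leaves_iff.mpr ⟨γ, hγ, hα⟩) hb)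
    _ = M.B k φ := by
        rw [B_eq]
        exact (forest_decomp M k _ (hF0 k) (hF1 k)).symm

theorem Closed_mono [DecidableEq V] (M : DBMSeq V) {φ : Sentence V} {k j : ℕ} (hkj : k ≤ j)
    (h : M.toDBFSeq.Closed k φ) : M.toDBFSeq.Closed j φ := by
  induction j, hkj using Nat.le_induction with
  | base => exact h
  | succ n hn ih => exact fun γ hγ => massStep_closed (M.massStep γ hγ n) (ih γ hγ)

theorem B_stab [DecidableEq V] (M : DBMSeq V) {φ : Sentence V} {k j : ℕ} (hkj : k ≤ j)
    (h : M.toDBFSeq.Closed k φ) : M.B j φ = M.B k φ := by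
  induction j, hkj using Nat.le_induction with
  | base => rfl
  | succ n hn ih => rw [B_succ M φ n (Closed_mono M hn h), ih]

theorem B_nonneg [DecidableEq V] (M : DBMSeq V) (k : ℕ) (φ : Sentence V) : 0 ≤ M.B k φ := by
  rw [B_eq]
  refine Finset.sum_nonneg fun α hα => ?_
  split
  · exact M.nonneg k α hα
  · exact le_rfl

theorem B_le_one [DecidableEq V] (M : DBMSeq V) (k : ℕ) (φ : Sentence V) : M.B k φ ≤ 1 := by
  rw [B_eq, ← M.total k]
  refine Finset.sum_le_sum fun α hα => ?_
  split
  · exact le_rfl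
  · exact M.nonneg k α hα

theorem cco_bot_of_neg {α : Option (Sentence V)} {φ : Sentence V}
    (h : Der0O α (.neg φ)) (ht : CC (∅ : Set (Sentence V)) φ) : CCO α Sentence.bot := by
  intro v hv
  have h1 := der0_sound h v hv
  have h2 := ht v (fun γ hγ => absurd hγ (Set.notMem_empty γ))
  simp [eval] at h1
  simp [h2] at h1

theorem cco_bot_of_conj {α : Option (Sentence V)} {θ φ : Sentence V}
    (h : Der0O α (.conj θ φ)) (ht : CC (∅ : Set (Sentence V)) (.neg (.conj θ φ))) :
    CCO α Sentence.bot := by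
  intro v hv
  have h1 := der0_sound h v hv
  have h2 := ht v (fun γ hγ => absurd hγ (Set.notMem_empty γ))
  simp [eval] at h1 h2
  simp [h1.1, h1.2] at h2

theorem B_taut [DecidableEq V] (M : DBMSeq V) {φ : Sentence V} {k : ℕ}
    (hc : M.toDBFSeq.Closed k φ) (ht : CC (∅ : Set (Sentence V)) φ) : M.B k φ = 1 := by
  rw [B_eq, ← M.total k]
  refine Finset.sum_congr rfl fun α hα => ?_
  obtain ⟨γ, hγ, hαγ⟩ := mem_leaves_iff.mp hα
  by_cases hb : Der0O α Sentence.bot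
  · rw [if_neg (fun hh => hh.2 hb), M.incZero k α hα hb]
  · rcases hc γ hγ α hαγ with hd | hd
    · rw [if_pos ⟨hd, hb⟩]
    · exact absurd (M.freeDC k γ hγ α hαγ (cco_bot_of_neg hd ht)) hb

theorem B_add [DecidableEq V] (M : DBMSeq V) {θ φ : Sentence V} {k : ℕ}
    (hcθ : M.toDBFSeq.Closed k θ) (hcφ : M.toDBFSeq.Closed k φ)
    (hinc : CC (∅ : Set (Sentence V)) (.neg (.conj θ φ))) :
    M.B k (.disj θ φ) = M.B k θ + M.B k φ := by
  rw [B_eq, B_eq, B_eq, ← Finset.sum_add_distrib]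
  refine Finset.sum_congr rfl fun α hα => ?_
  obtain ⟨γ, hγ, hαγ⟩ := mem_leaves_iff.mp hα
  by_cases hb : Der0O α Sentence.bot
  · rw [if_neg (fun hh => hh.2 hb), if_neg (fun hh => hh.2 hb),
      if_neg (fun hh => hh.2 hb)]
    ring
  · by_cases hθ : Der0O α θ
    · have hφn : ¬ Der0O α φ := fun hφ =>
        hb (M.freeDC k γ hγ α hαγ (cco_bot_of_conj (.andI hθ hφ) hinc))
      rw [if_pos ⟨Der0.orI1 hθ, hb⟩, if_pos ⟨hθ, hb⟩, if_neg (fun hh => hφn hh.1)]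
      ring
    · by_cases hφ : Der0O α φ
      · rw [if_pos ⟨Der0.orI2 hφ, hb⟩, if_neg (fun hh => hθ hh.1), if_pos ⟨hφ, hb⟩]
        ring
      · have hnθ : Der0O α (.neg θ) := (hcθ γ hγ α hαγ).resolve_left hθ
        have hnφ : Der0O α (.neg φ) := (hcφ γ hγ α hαγ).resolve_left hφ
        have hnd : ¬ Der0O α (.disj θ φ) := fun hd =>
          hb (Der0.botI hd (Der0.negOrI hnθ hnφ))
        rw [if_neg (fun hh => hnd hh.1), if_neg (fun hh => hθ hh.1),
          if_neg (fun hh => hφ hh.1)]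
        ring

end Statement12Aux

/-- For a DBM-sequence whose underlying DBF-sequence is SL-closed (and free of
deep contradictions), the limit `P(φ) = lim_k B_k(φ)` exists for every `φ ∈ SL` and the
resulting function is a probability function. -/
theorem belief_limit_is_probability {V : Type} [DecidableEq V] [Fintype V]
    (M : DBMSeq V) (hcl : ∀ φ : Sentence V, ∃ k, M.toDBFSeq.Closed k φ) :
    ∃ P : Sentence V → ℝ,
      (∀ φ : Sentence V, Filter.Tendsto (fun k => M.B k φ) Filter.atTop (nhds (P φ))) ∧
      IsProbability P := by
  classical
  choose k0 hk0 using hcl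
  refine ⟨fun φ => M.B (k0 φ) φ, fun φ => ?_, fun φ => ⟨B_nonneg M _ φ, B_le_one M _ φ⟩,
    fun φ hφ => B_taut M (hk0 φ) hφ, fun θ φ h => ?_⟩
  · refine Filter.Tendsto.congr' ?_ tendsto_const_nhds
    filter_upwards [Filter.eventually_ge_atTop (k0 φ)] with j hj
    exact (B_stab M hj (hk0 φ)).symm
  · have h1 : M.B (k0 (Sentence.disj θ φ)) (Sentence.disj θ φ)
        = M.B (max (k0 θ) (max (k0 φ) (k0 (Sentence.disj θ φ)))) (Sentence.disj θ φ) :=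
      (B_stab M (le_max_of_le_right (le_max_right _ _)) (hk0 _)).symm
    have h2 : M.B (max (k0 θ) (max (k0 φ) (k0 (Sentence.disj θ φ)))) θ = M.B (k0 θ) θ :=
      B_stab M (le_max_left _ _) (hk0 θ)
    have h3 : M.B (max (k0 θ) (max (k0 φ) (k0 (Sentence.disj θ φ)))) φ = M.B (k0 φ) φ :=
      B_stab M (le_max_of_le_right (le_max_left _ _)) (hk0 φ)
    show M.B (k0 (Sentence.disj θ φ)) (Sentence.disj θ φ) = M.B (k0 θ) θ + M.B (k0 φ) φ
    rw [h1, B_add M (Closed_mono M (le_max_left _ _) (hk0 θ))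
      (Closed_mono M (le_max_of_le_right (le_max_left _ _)) (hk0 φ)) h, h2, h3]


end DBB
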